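/- Let V and W be varieties of Ω-algebras of the same type without nullary operation symbols, let Σ be an equational base of V, and let U be the variety defined by Σ^p. Then for every set X, the free U-algebra XU over X belongs to the Mal'tsev product V ∘ W. -/

import Mathlib

structure Signature where
  symbols : Type
  arity : symbols → ℕ

structure Alg (S : Signature) where
  carrier : Type
  op : ∀ ω : S.symbols, (Fin (S.arity ω) → carrier) → carrier
  nonempty : Nonempty carrier

inductive Term (S : Signature) (X : Type) : Type
  | var : X → Term S X
  | app : ∀ ω : S.symbols, (Fin (S.arity ω) → Term S X) → Term S X

def Term.eval {S : Signature} {X : Type} (A : Alg S) (env : X → A.carrier) :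
    Term S X → A.carrier
  | .var x => env x
  | .app ω ts => A.op ω fun i => (ts i).eval A env

/-- The algebra `A` satisfies the identity `u = v`. -/
def Alg.sat {S : Signature} (A : Alg S) {X : Type} (u v : Term S X) : Prop :=
  ∀ env : X → A.carrier, u.eval A env = v.eval A env

/-- An identity: a pair of terms in the countably many variables `x₀, x₁, …`. -/
abbrev Ident (S : Signature) := Term S ℕ × Term S ℕ

/-- `A` lies in the variety axiomatized by the set of identities `E`. -/
def Alg.Models {S : Signature} (A : Alg S) (E : Set (Ident S)) : Prop :=
  ∀ e ∈ E, A.sat e.1 e.2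

/-- The identity `u = v` holds in the variety axiomatized by `E`. -/
def Conseq {S : Signature} (E : Set (Ident S)) {X : Type} (u v : Term S X) : Prop :=
  ∀ A : Alg S, A.Models E → A.sat u v

/-- `a` is an idempotent element of `A`. -/
def Alg.IsIdem {S : Signature} (A : Alg S) (a : A.carrier) : Prop :=
  ∀ ω : S.symbols, A.op ω (fun _ => a) = a

/-- `B` is (the universe of) a subalgebra of `A`. -/
def Alg.IsSubuniverse {S : Signature} (A : Alg S) (B : Set A.carrier) : Prop :=
  ∀ ω (a : Fin (S.arity ω) → A.carrier), (∀ i, a i ∈ B) → A.op ω a ∈ B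

/-- The subalgebra of `A` on a nonempty subuniverse `B`. -/
def Alg.subAlg {S : Signature} (A : Alg S) (B : Set A.carrier)
    (h : A.IsSubuniverse B) (hne : B.Nonempty) : Alg S where
  carrier := B
  op ω a := ⟨A.op ω fun i => (a i : A.carrier), h ω _ fun i => (a i).2⟩
  nonempty := hne.to_subtype

/-- A congruence of `A`: an equivalence relation compatible with all operations. -/
structure Congruence {S : Signature} (A : Alg S) where
  rel : A.carrier → A.carrier → Prop
  iseqv : Equivalence rel
  compat : ∀ ω (a b : Fin (S.arity ω) → A.carrier),
    (∀ i, rel (a i) (b i)) → rel (A.op ω a) (A.op ω b)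

def Congruence.setoid {S : Signature} {A : Alg S} (θ : Congruence A) :
    Setoid A.carrier := ⟨θ.rel, θ.iseqv⟩

/-- The quotient algebra `A/θ`. -/
noncomputable def Alg.quot {S : Signature} (A : Alg S) (θ : Congruence A) : Alg S where
  carrier := Quotient θ.setoid
  op ω q := Quotient.mk θ.setoid (A.op ω fun i => (q i).out)
  nonempty := A.nonempty.map (Quotient.mk θ.setoid)

/-- Membership in the Mal'tsev product of the varieties axiomatized by `V` and `W`:
`A` has a congruence `θ` with `A/θ` in (the variety of) `W` such that every
`θ`-class which is a subalgebra of `A` is an algebra in (the variety of) `V`. -/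
def InMaltsev {S : Signature} (V W : Set (Ident S)) (A : Alg S) : Prop :=
  ∃ θ : Congruence A, (A.quot θ).Models W ∧
    ∀ a : A.carrier, ∀ h : A.IsSubuniverse {b | θ.rel a b},
      (A.subAlg {b | θ.rel a b} h ⟨a, θ.iseqv.refl a⟩).Models V

/-- A class of algebras is a variety iff it is axiomatized by some set of identities. -/
def IsVarietyClass {S : Signature} (K : Alg S → Prop) : Prop :=
  ∃ E : Set (Ident S), ∀ A : Alg S, K A ↔ A.Models E

def Term.subst {S : Signature} {X Y : Type} (f : X → Term S Y) :
    Term S X → Term S Y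
  | .var x => f x
  | .app ω ts => .app ω fun i => (ts i).subst f

/-- The set `σᵖ` of identities obtained from the identity `σ` by substituting for
its variables pairwise `W`-equivalent term idempotents of (the variety of) `W`. -/
def sigmaP {S : Signature} (W : Set (Ident S)) (σ : Ident S) : Set (Ident S) :=
  { e | ∃ r : ℕ → Term S ℕ,
      (∀ i j : ℕ, Conseq W (r i) (r j)) ∧
      (∀ ω : S.symbols, Conseq W (Term.app ω fun _ => r 0) (r 0)) ∧
      e = (σ.1.subst r, σ.2.subst r) }

/-- `Σᵖ = ⋃_{σ ∈ Σ} σᵖ`. -/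
def SigmaP {S : Signature} (W : Set (Ident S)) (Sg : Set (Ident S)) :
    Set (Ident S) :=
  ⋃ σ ∈ Sg, sigmaP W σ

/-- The term algebra over `X`. -/
def termAlg (S : Signature) (X : Type) [Nonempty X] : Alg S where
  carrier := Term S X
  op := Term.app
  nonempty := ⟨Term.var (Classical.arbitrary X)⟩

/-- The congruence of the term algebra identifying terms `u`, `v` such that the
identity `u = v` holds in the variety axiomatized by `E`. -/
def freeCong (S : Signature) (E : Set (Ident S)) (X : Type) [Nonempty X] :
    Congruence (termAlg S X) where
  rel u v := Conseq E u v
  iseqv := ⟨fun _ _ _ _ => rfl, fun h A hA env => (h A hA env).symm,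
            fun h1 h2 A hA env => (h1 A hA env).trans (h2 A hA env)⟩
  compat := fun ω a b h A hA env => by
    show Term.eval A env (.app ω a) = Term.eval A env (.app ω b)
    simp only [Term.eval]
    exact congrArg _ (funext fun i => h i A hA env)

/-- The free algebra over `X` of the variety axiomatized by `E`: the quotient of
the term algebra by semantic equivalence modulo `E`. -/
noncomputable def freeAlg (S : Signature) (E : Set (Ident S)) (X : Type)
    [Nonempty X] : Alg S := (termAlg S X).quot (freeCong S E X)

section Aux

variable {S : Signature}

theorem Term.eval_subst {X Y : Type} (A : Alg S) (env : Y → A.carrier)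
    (f : X → Term S Y) (t : Term S X) :
    (t.subst f).eval A env = t.eval A (fun x => (f x).eval A env) := by
  induction t with
  | var x => rfl
  | app ω ts ih => exact congrArg _ (funext ih)

theorem Alg.sat_subst' {X Y : Type} (A : Alg S) {u v : Term S X} (h : A.sat u v)
    (f : X → Term S Y) : A.sat (u.subst f) (v.subst f) := fun env => by
  rw [Term.eval_subst, Term.eval_subst]; exact h _

theorem conseq_subst' {E : Set (Ident S)} {X Y : Type} {u v : Term S X}
    (h : Conseq E u v) (f : X → Term S Y) : Conseq E (u.subst f) (v.subst f) :=
  fun A hA => A.sat_subst' (h A hA) f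

theorem conseq_refl' {E : Set (Ident S)} {X : Type} (u : Term S X) : Conseq E u u :=
  fun _ _ _ => rfl

theorem conseq_symm' {E : Set (Ident S)} {X : Type} {u v : Term S X}
    (h : Conseq E u v) : Conseq E v u := fun A hA env => (h A hA env).symm

theorem conseq_trans' {E : Set (Ident S)} {X : Type} {u v w : Term S X}
    (h1 : Conseq E u v) (h2 : Conseq E v w) : Conseq E u w :=
  fun A hA env => (h1 A hA env).trans (h2 A hA env)

theorem conseq_app' {E : Set (Ident S)} {X : Type} {ω : S.symbols}
    {a b : Fin (S.arity ω) → Term S X} (h : ∀ i, Conseq E (a i) (b i)) :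
    Conseq E (.app ω a) (.app ω b) := fun A hA env => by
  show A.op ω (fun i => (a i).eval A env) = A.op ω (fun i => (b i).eval A env)
  exact congrArg _ (funext fun i => h i A hA env)

theorem conseq_subst_idem {W : Set (Ident S)} {X : Type} (r : ℕ → Term S X)
    (hr : ∀ i j, Conseq W (r i) (r j))
    (hid : ∀ ω, Conseq W (Term.app ω fun _ => r 0) (r 0)) :
    ∀ t : Term S ℕ, Conseq W (t.subst r) (r 0)
  | .var n => hr n 0
  | .app ω ts =>
    conseq_trans' (conseq_app' fun i => conseq_subst_idem r hr hid (ts i)) (hid ω)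

theorem conseq_of_mem_SigmaP {W Sg : Set (Ident S)} {e : Ident S}
    (he : e ∈ SigmaP W Sg) : Conseq W e.1 e.2 := by
  simp only [SigmaP, Set.mem_iUnion] at he
  obtain ⟨σ, hσ, r, hr, hid, rfl⟩ := he
  exact conseq_trans' (conseq_subst_idem r hr hid σ.1)
    (conseq_symm' (conseq_subst_idem r hr hid σ.2))

theorem conseq_mono {W Sg : Set (Ident S)} {X : Type} {u v : Term S X}
    (h : Conseq (SigmaP W Sg) u v) : Conseq W u v := fun A hA =>
  h A fun e he => conseq_of_mem_SigmaP he A hA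

theorem out_rel {A : Alg S} (θ : Congruence A) (x : A.carrier) :
    θ.rel (Quotient.mk θ.setoid x).out x := by
  have h := Quotient.exact (Quotient.out_eq (Quotient.mk θ.setoid x))
  exact h

theorem Term.eval_quot {X : Type} (A : Alg S) (θ : Congruence A)
    (env : X → (A.quot θ).carrier) (t : Term S X) :
    t.eval (A.quot θ) env = Quotient.mk θ.setoid (t.eval A fun x => (env x).out) := by
  induction t with
  | var x => exact (Quotient.out_eq _).symm
  | app ω ts ih =>
    show Quotient.mk θ.setoid (A.op ω fun i => ((ts i).eval (A.quot θ) env).out) = _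
    refine Quotient.sound (θ.compat ω _ _ fun i => ?_)
    rw [ih i]
    exact out_rel θ _

theorem Term.eval_termAlg {X Y : Type} [Nonempty X] (f : Y → Term S X) (t : Term S Y) :
    t.eval (termAlg S X) f = t.subst f := by
  induction t with
  | var x => rfl
  | app ω ts ih => exact congrArg _ (funext ih)

theorem Term.eval_subAlg {X : Type} (A : Alg S) (B : Set A.carrier)
    (h : A.IsSubuniverse B) (hne : B.Nonempty)
    (env : X → (A.subAlg B h hne).carrier) (t : Term S X) :
    (t.eval (A.subAlg B h hne) env).val
      = t.eval A fun x => (env x).val := by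
  induction t with
  | var x => rfl
  | app ω ts ih =>
    show A.op ω (fun i => ((ts i).eval (A.subAlg B h hne) env).val) = _
    exact congrArg _ (funext ih)

def Term.varList {X : Type} : Term S X → List X
  | .var x => [x]
  | .app _ ts => (List.ofFn fun i => (ts i).varList).flatten

theorem Term.mem_varList_app {X : Type} {ω : S.symbols}
    {ts : Fin (S.arity ω) → Term S X} {x : X} :
    x ∈ (Term.app ω ts).varList ↔ ∃ i, x ∈ (ts i).varList := by
  simp [Term.varList, List.mem_flatten, List.mem_ofFn]

theorem Term.subst_congr {X Y : Type} {f g : X → Term S Y} :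
    ∀ {t : Term S X}, (∀ x ∈ t.varList, f x = g x) → t.subst f = t.subst g
  | .var x, h => h x (by simp [Term.varList])
  | .app ω ts, h => by
    show Term.app ω _ = Term.app ω _
    exact congrArg _ (funext fun i => Term.subst_congr fun x hx =>
      h x (Term.mem_varList_app.mpr ⟨i, hx⟩))

theorem Term.subst_var {X : Type} : ∀ t : Term S X, t.subst Term.var = t
  | .var x => rfl
  | .app ω ts => congrArg _ (funext fun i => Term.subst_var (ts i))

theorem Term.subst_subst {X Y Z : Type} (f : X → Term S Y) (g : Y → Term S Z) :
    ∀ t : Term S X, (t.subst f).subst g = t.subst fun x => (f x).subst g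
  | .var x => rfl
  | .app ω ts => congrArg _ (funext fun i => Term.subst_subst f g (ts i))

theorem le_foldr_max : ∀ {l : List ℕ} {n : ℕ}, n ∈ l → n ≤ l.foldr max 0
  | a :: l, n, hn => by
    rcases List.mem_cons.mp hn with rfl | h
    · exact le_max_left _ _
    · exact le_trans (le_foldr_max h) (le_max_right _ _)

theorem sat_subst_of_sigmaP {W Sg : Set (Ident S)} {u v : Term S ℕ}
    (huv : (u, v) ∈ Sg) {X : Type} [Nonempty X] (r : ℕ → Term S X)
    (hr : ∀ i j, Conseq W (r i) (r j))
    (hid : ∀ ω, Conseq W (Term.app ω fun _ => r 0) (r 0)) :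
    Conseq (SigmaP W Sg) (u.subst r) (v.subst r) := by
  classical
  intro A hA
  set N : ℕ := (u.varList ++ v.varList).foldr max 0 + 1 with hN
  set L : List X := (List.range N).flatMap (fun n => (r n).varList) with hL
  set φ : X → ℕ := fun x : X => L.idxOf x with hφ
  set ψ : ℕ → X := fun k => L.getD k (Classical.arbitrary X) with hψ
  have hψφ : ∀ x ∈ L, ψ (φ x) = x := by
    intro x hx
    simp only [hψ, hφ]
    rw [List.getD_eq_getElem _ _ (List.idxOf_lt_length_iff.mpr hx)]
    exact List.getElem_idxOf (List.idxOf_lt_length_iff.mpr hx)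
  set r' : ℕ → Term S ℕ := fun n => (r (if n < N then n else 0)).subst
    (fun x => Term.var (φ x)) with hr'def
  have hr'0 : r' 0 = (r 0).subst (fun x => Term.var (φ x)) := by
    simp [hr'def]
  have hr' : ∀ i j, Conseq W (r' i) (r' j) := fun i j =>
    conseq_subst' (hr _ _) _
  have hid' : ∀ ω, Conseq W (Term.app ω fun _ => r' 0) (r' 0) := by
    intro ω
    rw [hr'0]
    exact conseq_subst' (hid ω) _
  have hmem : (u.subst r', v.subst r') ∈ SigmaP W Sg := by
    simp only [SigmaP, Set.mem_iUnion]
    exact ⟨(u, v), huv, r', hr', hid', rfl⟩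
  have hsat : A.sat (u.subst r') (v.subst r') := hA _ hmem
  have hmemL : ∀ n, n < N → ∀ x ∈ (r n).varList, x ∈ L := by
    intro n hn x hx
    rw [hL]
    exact List.mem_flatMap.mpr ⟨n, List.mem_range.mpr hn, hx⟩
  have hrec : ∀ t : Term S ℕ, (∀ n ∈ t.varList, n < N) →
      (t.subst r').subst (fun k => Term.var (ψ k)) = t.subst r := by
    intro t ht
    rw [Term.subst_subst]
    refine Term.subst_congr fun n hn => ?_
    have hnN := ht n hn
    simp only [hr'def, if_pos hnN]
    rw [Term.subst_subst]
    calc (r n).subst (fun x => (Term.var (φ x)).subst fun k => Term.var (ψ k))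
        = (r n).subst Term.var := Term.subst_congr fun x hx => by
          show Term.var (ψ (φ x)) = Term.var x
          rw [hψφ x (hmemL n hnN x hx)]
      _ = r n := Term.subst_var _
  have hu : ∀ n ∈ u.varList, n < N := fun n hn =>
    Nat.lt_succ_of_le (le_foldr_max (List.mem_append_left _ hn))
  have hv : ∀ n ∈ v.varList, n < N := fun n hn =>
    Nat.lt_succ_of_le (le_foldr_max (List.mem_append_right _ hn))
  rw [← hrec u hu, ← hrec v hv]
  exact A.sat_subst' hsat _

end Aux
/-- Let `Σ` be an equational base of the variety `V` and let `U`
be the variety defined by `Σᵖ`. Then the free `U`-algebra over any set `X`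
belongs to the Mal'tsev product `V ∘ W`. -/
theorem stmt_5 (S : Signature) (h0 : ∀ ω : S.symbols, 0 < S.arity ω)
    (V W : Set (Ident S)) (Sg : Set (Ident S))
    (hbase : ∀ A : Alg S, A.Models V ↔ A.Models Sg)
    (X : Type) [Nonempty X] :
    InMaltsev V W (freeAlg S (SigmaP W Sg) X) := by
  classical
  set E : Set (Ident S) := SigmaP W Sg with hE
  set F : Alg S := freeAlg S E X with hF
  set c := freeCong S E X with hc
  have outE : ∀ t : Term S X, Conseq E (Quotient.mk c.setoid t).out t :=
    fun t => out_rel c t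
  have hFop : ∀ (ω : S.symbols) (a : Fin (S.arity ω) → F.carrier),
      F.op ω a = Quotient.mk c.setoid (Term.app ω fun i => (a i).out) := fun ω a => rfl
  have θcompat : ∀ (ω : S.symbols) (a b : Fin (S.arity ω) → F.carrier),
      (∀ i, Conseq W (a i).out (b i).out) →
      Conseq W (F.op ω a).out (F.op ω b).out := by
    intro ω a b hab
    rw [hFop, hFop]
    refine conseq_trans' (conseq_mono (hE ▸ outE _)) ?_
    refine conseq_trans' (conseq_app' hab) ?_
    exact conseq_symm' (conseq_mono (hE ▸ outE _))
  set θ : Congruence F :=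
    { rel := fun a b => Conseq W a.out b.out
      iseqv := ⟨fun a => conseq_refl' _, conseq_symm', conseq_trans'⟩
      compat := θcompat } with hθ
  have hevalF : ∀ (g : ℕ → F.carrier) (t : Term S ℕ),
      Term.eval F g t = Quotient.mk c.setoid (t.subst fun n => (g n).out) := by
    intro g t
    have h1 := Term.eval_quot (termAlg S X) c g t
    have h1 := h1.trans (congrArg (Quotient.mk c.setoid) (Term.eval_termAlg (fun x => (g x).out) t))
    exact h1
  refine ⟨θ, ?_, ?_⟩
  · rintro ⟨u, v⟩ he env
    have hW : Conseq W u v := fun A hA => hA (u, v) he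
    rw [Term.eval_quot F θ env u, Term.eval_quot F θ env v, hevalF, hevalF]
    refine Quotient.sound ?_
    show Conseq W _ _
    refine conseq_trans' (conseq_mono (hE ▸ outE _)) ?_
    refine conseq_trans' (conseq_subst' hW _) ?_
    exact conseq_symm' (conseq_mono (hE ▸ outE _))
  · intro a h
    rw [hbase]
    rintro ⟨u, v⟩ he env
    set r : ℕ → Term S X := fun n => ((env n).val).out with hrdef
    have ha : ∀ n, Conseq W a.out (r n) := fun n => (env n).2
    have hr : ∀ i j, Conseq W (r i) (r j) := fun i j =>
      conseq_trans' (conseq_symm' (ha i)) (ha j)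
    have hid : ∀ ω, Conseq W (Term.app ω fun _ => r 0) (r 0) := by
      intro ω
      have hb : F.op ω (fun _ => (env 0).val) ∈ {b | θ.rel a b} :=
        h ω _ fun i => (env 0).2
      have hb' : Conseq W a.out (F.op ω fun _ => (env 0).val).out := hb
      have h2 : Conseq W (F.op ω fun _ => (env 0).val).out
          (Term.app ω fun _ => r 0) := by
        rw [hFop]
        exact conseq_mono (hE ▸ outE _)
      exact conseq_trans' (conseq_symm' h2)
        (conseq_trans' (conseq_symm' hb') (ha 0))
    have hkey : Conseq E (u.subst r) (v.subst r) := hE ▸ sat_subst_of_sigmaP he r hr hid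
    have hquot : Quotient.mk c.setoid (u.subst r) = Quotient.mk c.setoid (v.subst r) :=
      Quotient.sound hkey
    refine Subtype.ext ?_
    exact (Term.eval_subAlg F _ h _ env u).trans ((hevalF _ u).trans (hquot.trans
      ((hevalF _ v).symm.trans (Term.eval_subAlg F _ h _ env v).symm)))
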